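/- For any real κ > 0 and ρ > 0, exp(−2√(κρ)) = (√κ/√π) ∫₀^∞ t^{−3/2} exp(−κ/t) exp(−ρt) dt. -/

import Mathlib

open MeasureTheory Real

theorem laplace_slater (κ ρ : ℝ) (hκ : 0 < κ) (hρ : 0 < ρ) :
    Real.exp (-(2 * Real.sqrt (κ * ρ))) =
      (Real.sqrt κ / Real.sqrt Real.pi) *
        ∫ t in Set.Ioi (0 : ℝ),
          t ^ (-(3 / 2 : ℝ)) * Real.exp (-(κ / t)) * Real.exp (-(ρ * t)) := by
  set a := Real.sqrt ρ with ha_def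
  set b := Real.sqrt κ with hb_def
  have ha : 0 < a := Real.sqrt_pos.mpr hρ
  have hb : 0 < b := Real.sqrt_pos.mpr hκ
  set F : ℝ → ℝ := fun t => b * (t ^ (-(3/2:ℝ)) * Real.exp (-(κ/t)) * Real.exp (-(ρ*t))) with hF_def
  set G : ℝ → ℝ := fun t => a * (t ^ (-(1/2:ℝ)) * Real.exp (-(κ/t)) * Real.exp (-(ρ*t))) with hG_def
  set φ : ℝ → ℝ := fun t => a * t ^ ((1:ℝ)/2) - b * t ^ (-(1/2:ℝ)) with hφ_def
  set φ' : ℝ → ℝ := fun t => (a * t ^ (-(1/2:ℝ)) + b * t ^ (-(3/2:ℝ))) / 2 with hφ'_def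
  -- derivative of φ
  have hφd : ∀ t ∈ Set.Ioi (0:ℝ), HasDerivAt φ (φ' t) t := by
    intro t ht
    have ht' : (0:ℝ) < t := ht
    have h1 : HasDerivAt (fun t : ℝ => t ^ ((1:ℝ)/2)) (((1:ℝ)/2) * t ^ ((1:ℝ)/2 - 1)) t :=
      Real.hasDerivAt_rpow_const (Or.inl ht'.ne')
    have h2 : HasDerivAt (fun t : ℝ => t ^ (-(1/2:ℝ))) ((-(1/2:ℝ)) * t ^ (-(1/2:ℝ) - 1)) t :=
      Real.hasDerivAt_rpow_const (Or.inl ht'.ne')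
    have h := (h1.const_mul a).sub (h2.const_mul b)
    refine h.congr_deriv ?_
    rw [show (1:ℝ)/2 - 1 = -(1/2:ℝ) by norm_num, show -(1/2:ℝ) - 1 = -(3/2:ℝ) by norm_num]
    rw [hφ'_def]
    ring
  have hφ'pos : ∀ t ∈ Set.Ioi (0:ℝ), 0 < φ' t := by
    intro t ht
    have ht' : (0:ℝ) < t := ht
    have := Real.rpow_pos_of_pos ht' (-(1/2:ℝ))
    have := Real.rpow_pos_of_pos ht' (-(3/2:ℝ))
    rw [hφ'_def]
    positivity
  -- injectivity of φ
  have hφinj : Set.InjOn φ (Set.Ioi (0:ℝ)) := by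
    apply StrictMonoOn.injOn
    apply strictMonoOn_of_deriv_pos (convex_Ioi 0)
    · exact fun t ht => (hφd t ht).continuousAt.continuousWithinAt
    · intro t ht
      rw [interior_Ioi] at ht
      rw [(hφd t ht).deriv]
      exact hφ'pos t ht
  -- surjectivity of φ
  have hφsurj : φ '' Set.Ioi (0:ℝ) = Set.univ := by
    apply Set.eq_univ_of_forall
    intro u
    set d := Real.sqrt (u^2 + 4*a*b) with hd
    have hd2 : d^2 = u^2 + 4*a*b := Real.sq_sqrt (by positivity)
    have hdu : -u < d := by
      nlinarith [Real.sqrt_nonneg (u^2+4*a*b), abs_nonneg u, sq_abs u, neg_abs_le u,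
        sq_nonneg (d + u)]
    set s := (u + d) / (2*a) with hs
    have hs0 : 0 < s := by
      apply div_pos _ (by positivity); linarith
    refine ⟨s^2, Set.mem_Ioi.mpr (by positivity), ?_⟩
    have e1 : (s^2) ^ ((1:ℝ)/2) = s := by
      rw [← Real.rpow_natCast s 2, ← Real.rpow_mul hs0.le]; norm_num
    have e2 : (s^2) ^ (-(1/2:ℝ)) = s⁻¹ := by
      rw [← Real.rpow_natCast s 2, ← Real.rpow_mul hs0.le]
      norm_num [Real.rpow_neg_one]
    rw [hφ_def]
    simp only
    rw [e1, e2]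
    have key : a * s^2 = u * s + b := by
      have hq : a * s^2 - u*s - b = (d^2 - u^2 - 4*a*b)/(4*a) := by
        rw [hs]; field_simp; ring
      have h0 : a * s^2 - u*s - b = 0 := by rw [hq, hd2]; ring
      linarith
    field_simp
    nlinarith [key]
  -- the squared identity
  have hsq : ∀ t ∈ Set.Ioi (0:ℝ), (φ t)^2 = ρ * t + κ / t - 2 * b * a := by
    intro t ht
    have ht' : (0:ℝ) < t := ht
    have h1 : t ^ ((1:ℝ)/2) * t ^ ((1:ℝ)/2) = t := by
      rw [← Real.rpow_add ht']; norm_num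
    have h2 : t ^ (-(1/2:ℝ)) * t ^ (-(1/2:ℝ)) = t⁻¹ := by
      rw [← Real.rpow_add ht']; norm_num [Real.rpow_neg_one]
    have h3 : t ^ ((1:ℝ)/2) * t ^ (-(1/2:ℝ)) = 1 := by
      rw [← Real.rpow_add ht']; norm_num
    have hρ2 : a * a = ρ := Real.mul_self_sqrt hρ.le
    have hκ2 : b * b = κ := Real.mul_self_sqrt hκ.le
    rw [hφ_def]
    simp only
    linear_combination (a * a) * h1 + t * hρ2 + (b * b) * h2 + (1/t) * hκ2 - (2 * a * b) * h3
  -- F + G pointwise equals the transformed gaussian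
  have hFG : ∀ t ∈ Set.Ioi (0:ℝ), (2 * Real.exp (-(2*b*a))) * (|φ' t| • Real.exp (-(φ t)^2))
      = F t + G t := by
    intro t ht
    have ht' : (0:ℝ) < t := ht
    rw [smul_eq_mul, abs_of_pos (hφ'pos t ht), hsq t ht]
    rw [show -(ρ * t + κ / t - 2*b*a) = (-(κ/t) + -(ρ*t)) + 2*b*a by ring, Real.exp_add,
      Real.exp_add]
    have hone : Real.exp (-(2*b*a)) * Real.exp (2*b*a) = 1 := by
      rw [← Real.exp_add]; norm_num
    rw [hF_def, hG_def, hφ'_def]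
    simp only
    linear_combination (Real.exp (-(κ/t)) * Real.exp (-(ρ*t)) *
      (a * t ^ (-(1/2:ℝ)) + b * t ^ (-(3/2:ℝ)))) * hone
  -- gaussian integral and change of variables
  have hgauss_int : Integrable (fun u : ℝ => Real.exp (-u^2)) := by
    simpa using integrable_exp_neg_mul_sq (one_pos)
  have hgauss_val : ∫ u : ℝ, Real.exp (-u^2) = Real.sqrt π := by
    have := integral_gaussian 1
    simpa using this
  have hφd' : ∀ t ∈ Set.Ioi (0:ℝ), HasDerivWithinAt φ (φ' t) (Set.Ioi 0) t :=
    fun t ht => (hφd t ht).hasDerivWithinAt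
  have hchg := integral_image_eq_integral_abs_deriv_smul measurableSet_Ioi hφd' hφinj
    (fun u => Real.exp (-u^2))
  rw [hφsurj, MeasureTheory.setIntegral_univ] at hchg
  have hchg_int := (integrableOn_image_iff_integrableOn_abs_deriv_smul measurableSet_Ioi hφd'
    hφinj (fun u => Real.exp (-u^2))).mp (by rw [hφsurj]; exact hgauss_int.integrableOn)
  -- integrability of F + G
  have hIntFG : IntegrableOn (fun t => F t + G t) (Set.Ioi (0:ℝ)) := by
    have h2 := (hchg_int.const_mul (2 * Real.exp (-(2*b*a))))
    exact MeasureTheory.IntegrableOn.congr_fun h2 (fun t ht => hFG t ht) measurableSet_Ioi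
  -- value of ∫ (F + G)
  have hvalFG : ∫ t in Set.Ioi (0:ℝ), (F t + G t) = 2 * Real.exp (-(2*b*a)) * Real.sqrt π := by
    rw [← MeasureTheory.setIntegral_congr_fun measurableSet_Ioi hFG,
      MeasureTheory.integral_const_mul, ← hchg, hgauss_val]
  -- measurability / nonnegativity of F and G
  have hcont : ∀ p : ℝ, ContinuousOn (fun t : ℝ => t ^ (p:ℝ) * Real.exp (-(κ/t)) *
      Real.exp (-(ρ*t))) (Set.Ioi 0) := by
    intro p
    apply ContinuousOn.mul
    apply ContinuousOn.mul
    · exact fun t ht => (Real.continuousAt_rpow_const t p (Or.inl (ne_of_gt ht))).continuousWithinAt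
    · exact (Real.continuous_exp.comp_continuousOn
        ((continuousOn_const.div continuousOn_id (fun t ht => ne_of_gt ht)).neg))
    · exact (Real.continuous_exp.comp (continuous_const.mul continuous_id).neg).continuousOn
  have hFmeas : AEStronglyMeasurable F (volume.restrict (Set.Ioi (0:ℝ))) :=
    (((hcont (-(3/2:ℝ))).const_smul b).aestronglyMeasurable measurableSet_Ioi)
  have hGmeas : AEStronglyMeasurable G (volume.restrict (Set.Ioi (0:ℝ))) :=
    (((hcont (-(1/2:ℝ))).const_smul a).aestronglyMeasurable measurableSet_Ioi)
  have hFpos : ∀ t ∈ Set.Ioi (0:ℝ), 0 ≤ F t := by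
    intro t ht
    have ht' : (0:ℝ) < t := ht
    have := Real.rpow_pos_of_pos ht' (-(3/2:ℝ))
    rw [hF_def]; positivity
  have hGpos : ∀ t ∈ Set.Ioi (0:ℝ), 0 ≤ G t := by
    intro t ht
    have ht' : (0:ℝ) < t := ht
    have := Real.rpow_pos_of_pos ht' (-(1/2:ℝ))
    rw [hG_def]; positivity
  have hIntF : IntegrableOn F (Set.Ioi (0:ℝ)) := by
    apply hIntFG.mono' hFmeas
    filter_upwards [MeasureTheory.ae_restrict_mem measurableSet_Ioi] with t ht
    rw [Real.norm_eq_abs, abs_of_nonneg (hFpos t ht)]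
    linarith [hGpos t ht]
  have hIntG : IntegrableOn G (Set.Ioi (0:ℝ)) := by
    apply hIntFG.mono' hGmeas
    filter_upwards [MeasureTheory.ae_restrict_mem measurableSet_Ioi] with t ht
    rw [Real.norm_eq_abs, abs_of_nonneg (hGpos t ht)]
    linarith [hFpos t ht]
  -- ∫ F = ∫ G via the involution ψ
  have hψ : ∫ t in Set.Ioi (0:ℝ), F t = ∫ t in Set.Ioi (0:ℝ), G t := by
    set ψ : ℝ → ℝ := fun t => κ/ρ * t⁻¹ with hψ_def
    have hψd : ∀ t ∈ Set.Ioi (0:ℝ), HasDerivWithinAt ψ ((κ/ρ) * (-(t^2)⁻¹)) (Set.Ioi 0) t := by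
      intro t ht
      exact ((hasDerivAt_inv (ne_of_gt ht)).const_mul (κ/ρ)).hasDerivWithinAt
    have hψval : ∀ t : ℝ, 0 < t → ψ t = κ/(ρ*t) := by
      intro t ht; rw [hψ_def]; field_simp
    have hψinj : Set.InjOn ψ (Set.Ioi (0:ℝ)) := by
      intro x hx y hy h
      rw [hψ_def] at h
      simp only at h
      have h2 := mul_left_cancel₀ (div_pos hκ hρ).ne' h
      exact inv_injective h2
    have hψim : ψ '' Set.Ioi (0:ℝ) = Set.Ioi (0:ℝ) := by
      apply Set.Subset.antisymm
      · rintro y ⟨x, hx, rfl⟩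
        have hx' : (0:ℝ) < x := hx
        rw [hψ_def]
        simp only
        exact mul_pos (div_pos hκ hρ) (inv_pos.mpr hx')
      · intro y hy
        have hy' : (0:ℝ) < y := hy
        refine ⟨κ/(ρ*y), Set.mem_Ioi.mpr (by positivity), ?_⟩
        rw [hψ_def]
        field_simp
    have h := integral_image_eq_integral_abs_deriv_smul measurableSet_Ioi hψd hψinj F
    rw [hψim] at h
    rw [h]
    apply MeasureTheory.setIntegral_congr_fun measurableSet_Ioi
    intro t ht
    have ht' : (0:ℝ) < t := ht
    simp only [smul_eq_mul]
    have habs : |κ/ρ * (-(t^2)⁻¹)| = κ/(ρ*t^2) := by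
      have hpos : 0 < κ/ρ * (t^2)⁻¹ := by positivity
      rw [show κ/ρ * (-(t^2)⁻¹) = -(κ/ρ * (t^2)⁻¹) by ring, abs_neg, abs_of_pos hpos]
      field_simp
    rw [habs, hψval t ht', hF_def, hG_def]
    simp only
    -- now the algebraic identity proved before
    have hx1 : κ/(κ/(ρ*t)) = ρ*t := by field_simp
    have hx2 : ρ*(κ/(ρ*t)) = κ/t := by field_simp
    rw [hx1, hx2]
    have A : (κ/(ρ*t)) ^ (-(3/2:ℝ)) = κ ^ (-(3/2:ℝ)) * (ρ^((3/2:ℝ)) * t^((3/2:ℝ))) := by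
      rw [Real.div_rpow hκ.le (by positivity : (0:ℝ) ≤ ρ*t),
        Real.rpow_neg (by positivity : (0:ℝ) ≤ ρ*t), div_eq_mul_inv, inv_inv,
        Real.mul_rpow hρ.le ht'.le]
    rw [A, hb_def, ha_def, Real.sqrt_eq_rpow, Real.sqrt_eq_rpow]
    have E1 : κ * (κ ^ ((1/2:ℝ)) * κ ^ (-(3/2:ℝ))) = 1 := by
      rw [← Real.rpow_add hκ]
      norm_num [Real.rpow_neg_one, mul_inv_cancel₀ hκ.ne']
    have E2 : ρ ^ ((3/2:ℝ)) = ρ * ρ ^ ((1/2:ℝ)) := by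
      rw [show (3/2:ℝ) = 1 + 1/2 by norm_num, Real.rpow_add hρ, Real.rpow_one]
    have E3 : t ^ ((3/2:ℝ)) = t^2 * t ^ (-(1/2:ℝ)) := by
      rw [show (3/2:ℝ) = 2 + -(1/2) by norm_num, Real.rpow_add ht', Real.rpow_two]
    rw [E2, E3]
    rw [div_mul_eq_mul_div, div_eq_iff (by positivity : (ρ*t^2) ≠ 0)]
    linear_combination (ρ * ρ ^ ((1/2:ℝ)) * t^2 * t ^ (-(1/2:ℝ)) *
      Real.exp (-(ρ*t)) * Real.exp (-(κ/t))) * E1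
  -- combine
  have hsum : (∫ t in Set.Ioi (0:ℝ), F t) + (∫ t in Set.Ioi (0:ℝ), G t)
      = 2 * Real.exp (-(2*b*a)) * Real.sqrt π := by
    rw [← MeasureTheory.integral_add hIntF hIntG]
    exact hvalFG
  have hFval : ∫ t in Set.Ioi (0:ℝ), F t = Real.exp (-(2*b*a)) * Real.sqrt π := by
    rw [hψ] at hsum
    linarith [hsum]
  have hFpull : ∫ t in Set.Ioi (0:ℝ), F t
      = b * ∫ t in Set.Ioi (0:ℝ), t ^ (-(3/2:ℝ)) * Real.exp (-(κ/t)) * Real.exp (-(ρ*t)) := by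
    rw [hF_def, MeasureTheory.integral_const_mul]
  have hI : ∫ t in Set.Ioi (0:ℝ), t ^ (-(3/2:ℝ)) * Real.exp (-(κ/t)) * Real.exp (-(ρ*t))
      = Real.exp (-(2*b*a)) * Real.sqrt π / b := by
    rw [← hFval, hFpull]
    field_simp
    simp_rw [mul_comm _ ρ]
  have hgoal : (-(3/2:ℝ)) = (-(3 / 2 : ℝ)) := by norm_num
  rw [show (∫ t in Set.Ioi (0:ℝ), t ^ (-(3 / 2 : ℝ)) * Real.exp (-(κ/t)) * Real.exp (-(ρ*t)))
      = Real.exp (-(2*b*a)) * Real.sqrt π / b from hI]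
  have hab : Real.sqrt (κ * ρ) = b * a := Real.sqrt_mul hκ.le ρ
  rw [hab]
  have hπ : (0:ℝ) < Real.sqrt π := Real.sqrt_pos.mpr Real.pi_pos
  field_simp
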